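/- Let F be a satisfiable CNF formula whose factor graph is a tree, and consider Warning Propagation messages toward a fixed root. Define messages inductively: for an edge (C, x) directed towards the root, C → x = 1 iff every other variable y in C has Σ over clauses C' ≠ C containing y in the subtree below (C,x) of (C' → y signed by y's polarity in C') strictly favoring the polarity opposite to y's occurrence in C. If F is satisfiable by the all-TRUE assignment, then for every edge (C,x) towards the root, the (uniquely-determined) fixed-point message satisfies: C → x = 1 implies x appears positively in C. -/

import Mathlib

variable {α : Type*} [DecidableEq α]

/-- `x` occurs (positively or negatively) in the clause `C`; clauses are finite sets of
literals, a literal being a variable together with a polarity. -/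
def occursIn (x : α) (C : Finset (α × Bool)) : Prop :=
  (x, true) ∈ C ∨ (x, false) ∈ C

/-- The factor graph of a CNF formula `F`: a bipartite graph between variables and
clauses, with an edge whenever the variable occurs in the clause. -/
def litFactorGraph (F : Finset (Finset (α × Bool))) :
    SimpleGraph (α ⊕ Finset (α × Bool)) where
  Adj u v :=
    (∃ x C, u = Sum.inl x ∧ v = Sum.inr C ∧ C ∈ F ∧ occursIn x C) ∨
    (∃ x C, v = Sum.inl x ∧ u = Sum.inr C ∧ C ∈ F ∧ occursIn x C)
  symm := by
    constructor
    rintro u v (⟨x, C, h1, h2, h3, h4⟩ | ⟨x, C, h1, h2, h3, h4⟩)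
    · exact Or.inr ⟨x, C, h1, h2, h3, h4⟩
    · exact Or.inl ⟨x, C, h1, h2, h3, h4⟩
  loopless := by
    constructor
    rintro u (⟨x, C, rfl, h2, -⟩ | ⟨x, C, rfl, h2, -⟩) <;> simp at h2

/-- The net Warning Propagation bias of variable `y` as seen by clause `C`: the number
of warnings from clauses (other than `C`) where `y` occurs positively minus the number
of warnings from clauses where `y` occurs negatively. -/
def wpBias (F : Finset (Finset (α × Bool))) (M : Finset (α × Bool) → α → Bool)
    (y : α) (C : Finset (α × Bool)) : ℤ :=
  ∑ C' ∈ F.erase C,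
    ((if (y, true) ∈ C' ∧ M C' y = true then 1 else 0)
      - (if (y, false) ∈ C' ∧ M C' y = true then 1 else 0))

open SimpleGraph in
lemma adjVC {F : Finset (Finset (α × Bool))} {C : Finset (α × Bool)} {y : α}
    (hC : C ∈ F) (hy : occursIn y C) :
    (litFactorGraph F).Adj (Sum.inl y) (Sum.inr C) :=
  Or.inl ⟨y, C, rfl, rfl, hC, hy⟩

open SimpleGraph in
/-- Any walk from `C'` to `C` must pass through `y` when `y` occurs in both. -/
lemma lemA {F : Finset (Finset (α × Bool))} {C C' : Finset (α × Bool)} {y : α}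
    (htree : (litFactorGraph F).IsAcyclic)
    (hC : C ∈ F) (hC' : C' ∈ F) (hne : C' ≠ C)
    (hyC : occursIn y C) (hyC' : occursIn y C')
    (p : (litFactorGraph F).Walk (Sum.inr C') (Sum.inr C)) :
    Sum.inl y ∈ p.support := by
  by_contra hmem
  have hp1 : ((adjVC hC' hyC').symm.toWalk.append
      (adjVC hC hyC).toWalk).IsPath := by
    simp [Walk.isPath_def, hne]
  have huniq := (SimpleGraph.isAcyclic_iff_path_unique.mp htree)
    p.toPath ⟨_, hp1⟩
  have hsupp : Sum.inl y ∈ p.toPath.1.support := by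
    rw [huniq]; simp
  exact hmem (Walk.support_bypass_subset _ hsupp)

open SimpleGraph in
/-- A walk from `C'` to the variable `x` must pass through `y`. -/
lemma lemB {F : Finset (Finset (α × Bool))} {C C' : Finset (α × Bool)} {x y : α}
    (htree : (litFactorGraph F).IsAcyclic)
    (hC : C ∈ F) (hC' : C' ∈ F) (hne : C' ≠ C) (hyx : y ≠ x)
    (hxC : occursIn x C) (hyC : occursIn y C) (hyC' : occursIn y C')
    (p : (litFactorGraph F).Walk (Sum.inr C') (Sum.inl x))
    (hp : Sum.inl y ∉ p.support) : False := by
  have hCp : Sum.inr C ∉ p.support := by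
    intro hmem
    exact (fun h => hp (Walk.support_takeUntil_subset _ hmem h))
      (lemA htree hC hC' hne hyC hyC' (p.takeUntil (Sum.inr C) hmem))
  have hp1 : ((adjVC hC hyC).toWalk.append
      (adjVC hC hxC).symm.toWalk).IsPath := by
    simp [Walk.isPath_def, hyx]
  set w : (litFactorGraph F).Walk (Sum.inl y) (Sum.inl x) :=
    Walk.cons (adjVC hC' hyC') p with hw
  have huniq := (SimpleGraph.isAcyclic_iff_path_unique.mp htree)
    w.toPath ⟨_, hp1⟩
  have hsupp : Sum.inr C ∈ w.toPath.1.support := by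
    rw [huniq]; simp
  have := Walk.support_bypass_subset _ hsupp
  rw [hw] at this
  simp [Walk.support_cons] at this
  exact hCp this

/-- The set of clauses reachable from `C` by a walk avoiding the variable `x`. -/
def wset (F : Finset (Finset (α × Bool))) (C : Finset (α × Bool)) (x : α) :
    Set (Finset (α × Bool)) :=
  {D | D ∈ F ∧ ∃ p : (litFactorGraph F).Walk (Sum.inr C) (Sum.inr D),
    Sum.inl x ∉ p.support}

lemma bias_neg {F : Finset (Finset (α × Bool))} {M : Finset (α × Bool) → α → Bool}
    {y : α} {C : Finset (α × Bool)} (h : wpBias F M y C < 0) :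
    ∃ C' ∈ F.erase C, (y, false) ∈ C' ∧ (y, true) ∉ C' ∧ M C' y = true := by
  by_contra hcon
  push_neg at hcon
  refine absurd h (not_lt.mpr (Finset.sum_nonneg fun C' hC' => ?_))
  have := hcon C' hC'
  split_ifs with h1 h2 <;> simp_all

open SimpleGraph in
lemma auxWP (F : Finset (Finset (α × Bool))) (M : Finset (α × Bool) → α → Bool)
    (hsat : ∀ C ∈ F, ∃ x, (x, true) ∈ C)
    (htree : (litFactorGraph F).IsAcyclic)
    (hfix : ∀ C ∈ F, ∀ x : α, occursIn x C →
      (M C x = true ↔ ∀ y : α, y ≠ x → ∀ b : Bool, (y, b) ∈ C →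
        (if b then wpBias F M y C < 0 else 0 < wpBias F M y C))) :
    ∀ n : ℕ, ∀ C ∈ F, ∀ x : α, occursIn x C → (wset F C x).ncard ≤ n →
      M C x = true → (x, true) ∈ C := by
  intro n
  induction n with
  | zero =>
    intro C hC x hx hcard hM
    exfalso
    have hCin : C ∈ wset F C x := ⟨hC, Walk.nil, by simp⟩
    have hfin : (wset F C x).Finite :=
      Set.Finite.subset F.finite_toSet (fun D hD => hD.1)
    have := (Set.ncard_pos hfin).mpr ⟨C, hCin⟩
    omega
  | succ n ih =>
    intro C hC x hx hcard hM
    by_contra hxt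
    obtain ⟨y, hy⟩ := hsat C hC
    have hyx : y ≠ x := by rintro rfl; exact hxt hy
    have hbias : wpBias F M y C < 0 := by
      have := (hfix C hC x hx).mp hM y hyx true hy
      simpa using this
    obtain ⟨C', hC'e, hynf, hynt, hM'⟩ := bias_neg hbias
    have hC'F : C' ∈ F := Finset.mem_of_mem_erase hC'e
    have hne : C' ≠ C := Finset.ne_of_mem_erase hC'e
    have hyC' : occursIn y C' := Or.inr hynf
    have hyC : occursIn y C := Or.inl hy
    have hsub : wset F C' y ⊆ wset F C x := by
      rintro D ⟨hD, p, hp⟩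
      have hxp : Sum.inl x ∉ p.support := by
        intro hmem
        exact lemB htree hC hC'F hne hyx hx hyC hyC'
          (p.takeUntil (Sum.inl x) hmem)
          (fun h => hp (Walk.support_takeUntil_subset _ hmem h))
      refine ⟨hD, Walk.cons (adjVC hC hyC).symm (Walk.cons (adjVC hC'F hyC') p), ?_⟩
      simp [Walk.support_cons, hxp, hyx.symm]
    have hCnot : C ∉ wset F C' y := by
      rintro ⟨-, p, hp⟩
      exact hp (lemA htree hC hC'F hne hyC hyC' p)
    have hCin : C ∈ wset F C x := ⟨hC, Walk.nil, by simp⟩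
    have hss : wset F C' y ⊂ wset F C x :=
      ⟨hsub, fun h => hCnot (h hCin)⟩
    have hfin : (wset F C x).Finite :=
      Set.Finite.subset F.finite_toSet (fun D hD => hD.1)
    have hlt := Set.ncard_lt_ncard hss hfin
    exact hynt (ih C' hC'F y hyC' (by omega) hM')

/-- On a tree factor graph of a formula satisfied by the all-TRUE assignment, any
Warning Propagation fixed point `M` has the property that every message `C → x = 1`
directed towards a fixed root `r` implies that `x` appears positively in `C`. -/
theorem stmt14 (F : Finset (Finset (α × Bool))) (M : Finset (α × Bool) → α → Bool)
    (hsat : ∀ C ∈ F, ∃ x, (x, true) ∈ C)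
    (htree : (litFactorGraph F).IsAcyclic)
    (hfix : ∀ C ∈ F, ∀ x : α, occursIn x C →
      (M C x = true ↔ ∀ y : α, y ≠ x → ∀ b : Bool, (y, b) ∈ C →
        (if b then wpBias F M y C < 0 else 0 < wpBias F M y C)))
    (r : α ⊕ Finset (α × Bool)) :
    ∀ C ∈ F, ∀ x : α, occursIn x C →
      (∀ p : (litFactorGraph F).Walk (Sum.inr C) r, p.IsPath → Sum.inl x ∈ p.support) →
      M C x = true → (x, true) ∈ C := by
  intro C hC x hx _ hM
  exact auxWP F M hsat htree hfix (wset F C x).ncard C hC x hx le_rfl hM
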